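/- The elements W¹_k = -t^k(D + (k+1)/2) for k ∈ ℤ of the centrally extended Lie algebra 𝒟̂⁺ satisfy the Virasoro relations [W¹_m, W¹_n] = (m-n)W¹_{m+n} + δ_{m,-n}·((m³-m)/12)·C. -/
import Mathlib


open Polynomial

noncomputable abbrev DOp := ℤ →₀ Polynomial ℂ

/-- `(t^k f(D)) ⬝ (t^l g(D)) = t^{k+l} f(D+l) g(D)`. -/
noncomputable def DOp.mul (a b : DOp) : DOp :=
  a.sum fun k f => b.sum fun l g =>
    Finsupp.single (k + l) (f.comp (X + C (l : ℂ)) * g)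

/-- `Ψ(t^r f(D), t^{-r} g(D)) = Σ_{-r ≤ j ≤ -1} f(j) g(j+r)` for `r ≥ 0`,
extended antisymmetrically, vanishing unless the weights sum to zero. -/
noncomputable def psiPair (r : ℤ) (f g : Polynomial ℂ) : ℂ :=
  if 0 ≤ r then ∑ i ∈ Finset.range r.toNat, f.eval (-(i + 1 : ℂ)) * g.eval ((r : ℂ) - (i + 1))
  else -∑ i ∈ Finset.range (-r).toNat, g.eval (-(i + 1 : ℂ)) * f.eval ((-r : ℂ) - (i + 1))

noncomputable def Psi (a b : DOp) : ℂ :=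
  a.sum fun k f => psiPair k f (b (-k))

/-- The centrally extended algebra `𝒟̂ = 𝒟 ⊕ ℂC`. -/
noncomputable abbrev DOpHat := DOp × ℂ

/-- The bracket of `𝒟̂`:
`[t^r f(D), t^s g(D)] = t^{r+s}(f(D+s)g(D) - f(D)g(D+r)) + Ψ(t^r f(D), t^s g(D))·C`. -/
noncomputable def DOpHat.bracket (a b : DOpHat) : DOpHat :=
  (DOp.mul a.1 b.1 - DOp.mul b.1 a.1, Psi a.1 b.1)

/-- The element `W¹_k = -t^k (D + (k+1)/2)` of `𝒟̂⁺`. -/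
noncomputable def W1 (k : ℤ) : DOpHat :=
  (Finsupp.single k (-(X + C (((k : ℂ) + 1) / 2))), 0)

/-- The central element `C`. -/
noncomputable def Cel : DOpHat := (0, 1)

lemma aux_sum1 (N : ℕ) : ∑ i ∈ Finset.range N, ((i : ℂ) + 1) = N * (N + 1) / 2 := by
  induction N with
  | zero => simp
  | succ k ih => rw [Finset.sum_range_succ, ih]; push_cast; ring

lemma aux_sum2 (N : ℕ) : ∑ i ∈ Finset.range N, ((i : ℂ) + 1) ^ 2
    = (N : ℂ) * ((N : ℂ) + 1) * (2 * (N : ℂ) + 1) / 6 := by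
  induction N with
  | zero => simp
  | succ k ih => rw [Finset.sum_range_succ, ih]; push_cast; field_simp; ring

lemma aux_sumkey (N : ℕ) :
    ∑ i ∈ Finset.range N, ((i : ℂ) + 1 - ((N : ℂ) + 1) / 2) ^ 2 = ((N : ℂ) ^ 3 - N) / 12 := by
  have h : ∀ i ∈ Finset.range N, ((i : ℂ) + 1 - ((N : ℂ) + 1) / 2) ^ 2
      = ((i : ℂ) + 1) ^ 2 - (((N : ℂ) + 1)) * ((i : ℂ) + 1) + (((N : ℂ) + 1) / 2) ^ 2 := by
    intro i _; ring
  rw [Finset.sum_congr rfl h, Finset.sum_add_distrib, Finset.sum_sub_distrib,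
    ← Finset.mul_sum, Finset.sum_const, Finset.card_range, aux_sum1, aux_sum2, nsmul_eq_mul]
  field_simp; ring

lemma aux_mul_single (k l : ℤ) (f g : Polynomial ℂ) :
    DOp.mul (Finsupp.single k f) (Finsupp.single l g)
      = Finsupp.single (k + l) (f.comp (X + C (l : ℂ)) * g) := by
  unfold DOp.mul
  rw [Finsupp.sum_single_index, Finsupp.sum_single_index]
  · simp
  · rw [Finsupp.sum_single_index] <;> simp

lemma aux_Psi_single (k l : ℤ) (f g : Polynomial ℂ) :
    Psi (Finsupp.single k f) (Finsupp.single l g)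
      = psiPair k f ((Finsupp.single l g) (-k)) := by
  unfold Psi
  rw [Finsupp.sum_single_index]
  unfold psiPair
  split <;> simp

lemma aux_psiPair_zero (k : ℤ) (f : Polynomial ℂ) : psiPair k f 0 = 0 := by
  unfold psiPair
  split <;> simp

lemma aux_psi_key (m : ℤ) :
    psiPair m (-(X + C (((m : ℂ) + 1) / 2))) (-(X + C ((-(m : ℂ) + 1) / 2)))
      = ((m : ℂ) ^ 3 - (m : ℂ)) / 12 := by
  unfold psiPair
  split
  · rename_i hm
    have hcast : ((m.toNat : ℂ)) = (m : ℂ) := by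
      exact_mod_cast congrArg (Int.cast : ℤ → ℂ) (Int.toNat_of_nonneg hm)
    rw [← hcast, ← aux_sumkey m.toNat]
    apply Finset.sum_congr rfl
    intro i _
    simp only [eval_neg, eval_add, eval_X, eval_C]
    ring
  · rename_i hm
    have hm' : 0 ≤ -m := by omega
    have hcast : (((-m).toNat : ℂ)) = -(m : ℂ) := by
      have := congrArg (Int.cast : ℤ → ℂ) (Int.toNat_of_nonneg hm')
      push_cast at this
      exact_mod_cast this
    have key := aux_sumkey (-m).toNat
    rw [hcast] at key
    push_cast
    calc -∑ i ∈ Finset.range (-m).toNat,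
          eval (-(↑i + 1)) (-(X + C ((-(m:ℂ) + 1) / 2))) *
            eval (-(m:ℂ) - ((i:ℂ) + 1)) (-(X + C (((m:ℂ) + 1) / 2)))
        = -∑ i ∈ Finset.range (-m).toNat, ((i : ℂ) + 1 - (-(m:ℂ) + 1) / 2) ^ 2 := by
          apply congrArg
          apply Finset.sum_congr rfl
          intro i _
          simp only [eval_neg, eval_add, eval_X, eval_C]
          push_cast
          ring
      _ = ((m : ℂ) ^ 3 - (m : ℂ)) / 12 := by rw [key]; ring

/-- the elements `W¹_k` satisfy the Virasoro relations
`[W¹_m, W¹_n] = (m-n) W¹_{m+n} + δ_{m,-n} ((m³-m)/12) C`. -/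
theorem W1_Virasoro (m n : ℤ) :
    DOpHat.bracket (W1 m) (W1 n) =
      ((m : ℂ) - (n : ℂ)) • W1 (m + n) +
        (if m = -n then ((m : ℂ) ^ 3 - (m : ℂ)) / 12 else 0) • Cel := by
  simp only [DOpHat.bracket, W1, Cel, aux_mul_single, aux_Psi_single,
    Prod.smul_mk, Prod.mk_add_mk, smul_zero, add_zero, zero_add, smul_eq_mul, mul_one,
    Prod.mk.injEq, Finsupp.smul_single, smul_zero]
  constructor
  · rw [add_comm n m, ← Finsupp.single_sub]
    congr 1
    apply Polynomial.funext
    intro x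
    simp only [eval_smul, smul_eq_mul, eval_sub, eval_mul, eval_comp, eval_neg, eval_add, eval_X,
      eval_C, Int.cast_add]
    ring
  · rw [Finsupp.single_apply]
    by_cases h : m = -n
    · have hn : n = -m := by omega
      subst hn
      simp only [neg_neg, if_pos rfl]
      push_cast
      rw [aux_psi_key m]; ring
    · rw [if_neg (by omega : ¬ n = -m), if_neg h, aux_psiPair_zero]
      ring
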